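/- For irrational $a$ with $0<a<1$, the sequences $\{\lfloor (n+1/2)/a \rfloor\}_{n\in\mathbb{Z}}$ and $\{\lfloor (n+1/2)/(1-a) \rfloor\}_{n\in\mathbb{Z}}$ form a partition of $\mathbb{Z}$: every integer is of exactly one of these forms for exactly one $n$, and the two ranges are disjoint. -/

import Mathlib

private lemma floor_div_eq_iff (c : ℝ) (hc : 0 < c) (n m : ℤ) :
    ⌊((n : ℝ) + 1/2) / c⌋ = m ↔ (m : ℝ) * c ≤ (n : ℝ) + 1/2 ∧ (n : ℝ) + 1/2 < ((m : ℝ) + 1) * c := by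
  rw [Int.floor_eq_iff, le_div_iff₀ hc, div_lt_iff₀ hc]

private lemma irr_ne_half (a : ℝ) (ha : Irrational a) : ∀ p q : ℤ, (p : ℝ) * a ≠ (q : ℝ) + 1/2 := by
  intro p q h
  rcases eq_or_ne p 0 with hp | hp
  · rw [hp] at h
    push_cast at h
    have h2 : ((2 * q : ℤ) : ℝ) = (-1 : ℤ) := by push_cast; linarith
    have := Int.cast_injective h2
    omega
  · have hirr : Irrational ((p : ℝ) * a) := (ha.intCast_mul hp)
    apply hirr
    exact ⟨(q : ℚ) + 1/2, by push_cast; linarith [h]⟩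

theorem beatty_fraenkel_partition (a : ℝ) (ha : Irrational a) (h0 : 0 < a) (h1 : a < 1) :
    ∀ m : ℤ,
      ((∃! n : ℤ, ⌊((n : ℝ) + 1/2) / a⌋ = m) ∧ ¬ ∃ n : ℤ, ⌊((n : ℝ) + 1/2) / (1 - a)⌋ = m) ∨
      ((∃! n : ℤ, ⌊((n : ℝ) + 1/2) / (1 - a)⌋ = m) ∧ ¬ ∃ n : ℤ, ⌊((n : ℝ) + 1/2) / a⌋ = m) := by
  intro m
  have hb : (0:ℝ) < 1 - a := by linarith
  set k : ℤ := ⌊(m : ℝ) * a + 1/2⌋ with hkdef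
  have hk1 : (k : ℝ) ≤ (m : ℝ) * a + 1/2 := Int.floor_le _
  have hk2 : (m : ℝ) * a + 1/2 < (k : ℝ) + 1 := Int.lt_floor_add_one _
  have h1a : (m : ℝ) * a < (k : ℝ) + 1/2 := by linarith
  have hne := irr_ne_half a ha
  have htri : (k : ℝ) + 1/2 < ((m : ℝ) + 1) * a ∨ ((m : ℝ) + 1) * a < (k : ℝ) + 1/2 := by
    have h := hne (m + 1) k
    push_cast at h
    rcases h.lt_or_gt with h' | h'
    · right; linarith
    · left; linarith
  rcases htri with hc1 | hc2
  · -- case 1: k + 1/2 < (m+1)a ; witness n = k for the first sequence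
    left
    constructor
    · refine ⟨k, ?_, ?_⟩
      · show ⌊((k : ℝ) + 1/2) / a⌋ = m
        rw [floor_div_eq_iff a h0]
        exact ⟨by linarith, by linarith⟩
      · intro n hn
        rw [floor_div_eq_iff a h0] at hn
        obtain ⟨p, q⟩ := hn
        have hstrict : (m : ℝ) * a < (n : ℝ) + 1/2 := lt_of_le_of_ne p (hne m n)
        have hA : (n : ℝ) < (k : ℝ) + 1 := by nlinarith
        have hB : (k : ℝ) < (n : ℝ) + 1 := by linarith
        have hA' : n < k + 1 := by exact_mod_cast hA
        have hB' : k < n + 1 := by exact_mod_cast hB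
        omega
    · rintro ⟨n, hn⟩
      rw [floor_div_eq_iff (1 - a) hb] at hn
      obtain ⟨p, q⟩ := hn
      have p' : (m : ℝ) - (m : ℝ) * a ≤ (n : ℝ) + 1/2 := by nlinarith
      have q' : (n : ℝ) + 1/2 < (m : ℝ) + 1 - ((m : ℝ) + 1) * a := by nlinarith
      -- then k < m - n < k + 1, contradiction
      have hA : (k : ℝ) < (m : ℝ) - (n : ℝ) := by linarith
      have hB : (m : ℝ) - (n : ℝ) < (k : ℝ) + 1 := by linarith
      have hA' : k < m - n := by exact_mod_cast hA
      have hB' : m - n < k + 1 := by exact_mod_cast hB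
      omega
  · -- case 2: (m+1)a < k + 1/2 ; witness n = m - k for the second sequence
    right
    constructor
    · refine ⟨m - k, ?_, ?_⟩
      · show ⌊(((m - k : ℤ) : ℝ) + 1/2) / (1 - a)⌋ = m
        rw [floor_div_eq_iff (1 - a) hb]
        constructor
        · push_cast; nlinarith
        · push_cast; nlinarith
      · intro n hn
        rw [floor_div_eq_iff (1 - a) hb] at hn
        obtain ⟨p, q⟩ := hn
        have p' : (m : ℝ) - (m : ℝ) * a ≤ (n : ℝ) + 1/2 := by nlinarith
        have q' : (n : ℝ) + 1/2 < (m : ℝ) + 1 - ((m : ℝ) + 1) * a := by nlinarith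
        have hma : ((m : ℝ) + 1) * a = (m : ℝ) * a + a := by ring
        have hA : (k : ℝ) ≤ (m : ℝ) - (n : ℝ) := by
          -- (m+1)a > k - 1/2 since ma ≥ k - 1/2 and a > 0
          have : (k : ℝ) - 1 < (m : ℝ) - (n : ℝ) := by nlinarith
          have h' : ((k : ℤ) : ℝ) - 1 < ((m - n : ℤ) : ℝ) := by push_cast; linarith
          have : k - 1 < m - n := by exact_mod_cast h'
          have : k ≤ m - n := by omega
          exact_mod_cast this
        have hB : (m : ℝ) - (n : ℝ) < (k : ℝ) + 1 := by linarith
        have hA' : k ≤ m - n := by exact_mod_cast hA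
        have hB' : m - n < k + 1 := by exact_mod_cast hB
        omega
    · rintro ⟨n, hn⟩
      rw [floor_div_eq_iff a h0] at hn
      obtain ⟨p, q⟩ := hn
      have hstrict : (m : ℝ) * a < (n : ℝ) + 1/2 := lt_of_le_of_ne p (hne m n)
      -- n + 1/2 < (m+1)a < k + 1/2 so n < k, n ≤ k - 1, n + 1/2 ≤ k - 1/2 ≤ ma, contradiction
      have hA : (n : ℝ) < (k : ℝ) := by linarith
      have hA' : n < k := by exact_mod_cast hA
      have hle : (n : ℝ) + 1 ≤ (k : ℝ) := by exact_mod_cast (by omega : n + 1 ≤ k)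
      linarith
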